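/- For the dynamic program S_k(l) = min_{i ∈ Q_k(l)} d_i(l) + S_{k-1}(l-2) with S_0(l) = 0 for l ≤ 0, if each set Q_k(l) is nonempty for the relevant arguments, then S_K(l) equals the minimum over all choices of one disk per cell of the total movement cost, where disk i assigned to cell k moves to the point (l - 2(K-k) - 1, 0). -/

import Mathlib

noncomputable def pt (x y : ℝ) : EuclideanSpace ℝ (Fin 2) := WithLp.toLp 2 ![x, y]

/-- Correctness of the dynamic program: with `Q(l)` the set of disks within distance `ε`
of `(l-1,0)`, `d i l = ‖p_i − (l-1,0)‖`, and the recursion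
`S (k+1) l = min_{i ∈ Q l} d i l + S k (l-2)`, `S 0 l = 0`, if the sets `Q` at the
relevant arguments are nonempty and pairwise disjoint over distinct cells, then `S K l`
equals the minimum total movement over injective assignments of one disk per cell, where
the disk assigned to cell `k` (0-indexed) moves to `(l - 2(K-1-k) - 1, 0)`. -/
theorem dynamic_program_correct (n K : ℕ) (l ε : ℝ)
    (p : Fin n → EuclideanSpace ℝ (Fin 2))
    (d : Fin n → ℝ → ℝ) (hd : ∀ i t, d i t = dist (p i) (pt (t - 1) 0))
    (Q : ℝ → Set (Fin n)) (hQ : ∀ t, Q t = {i | d i t ≤ ε})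
    (S : ℕ → ℝ → ℝ)
    (hS0 : ∀ t, S 0 t = 0)
    (hSrec : ∀ k t, S (k + 1) t = sInf ((fun i => d i t) '' Q t) + S k (t - 2))
    (hnonempty : ∀ k : ℕ, k < K → (Q (l - 2 * ((K : ℝ) - 1 - k))).Nonempty)
    (hdisjoint : ∀ k k' : ℕ, k < K → k' < K → k ≠ k' →
      Disjoint (Q (l - 2 * ((K : ℝ) - 1 - k))) (Q (l - 2 * ((K : ℝ) - 1 - k')))) :
    S K l = sInf {c : ℝ | ∃ σ : Fin K → Fin n, Function.Injective σ ∧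
      (∀ k : Fin K, σ k ∈ Q (l - 2 * ((K : ℝ) - 1 - (k : ℕ)))) ∧
      c = ∑ k : Fin K, d (σ k) (l - 2 * ((K : ℝ) - 1 - (k : ℕ)))} := by
  classical
  set F : ℝ → ℝ := fun t => sInf ((fun i => d i t) '' Q t) with hF
  -- step 1 : unfold the recursion
  have hstep : ∀ k t, S k t = ∑ j ∈ Finset.range k, F (t - 2 * j) := by
    intro k
    induction k with
    | zero => intro t; simp [hS0]
    | succ k ih =>
      intro t
      rw [hSrec, ih, Finset.sum_range_succ', add_comm]
      congr 1
      · refine Finset.sum_congr rfl fun j _ => ?_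
        congr 1
        push_cast
        ring
      · norm_num; rfl
  -- recast the cell positions
  set t : Fin K → ℝ := fun k => l - 2 * ((K : ℝ) - 1 - (k : ℕ)) with ht
  have hcast : ∀ k : Fin K, t k = l - 2 * ((K - 1 - (k : ℕ) : ℕ) : ℝ) := by
    intro k
    have hk := k.isLt
    rw [ht]
    rw [Nat.cast_sub (by omega), Nat.cast_sub (by omega)]
    push_cast
    ring
  have hsum : S K l = ∑ k : Fin K, F (t k) := by
    have h1 : ∑ k : Fin K, F (t k)
        = ∑ j ∈ Finset.range K, F (l - 2 * ((K - 1 - j : ℕ) : ℝ)) := by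
      simp only [hcast]
      exact Fin.sum_univ_eq_sum_range (fun j => F (l - 2 * ((K - 1 - j : ℕ) : ℝ))) K
    rw [hstep K l, h1]
    exact (Finset.sum_range_reflect (fun j => F (l - 2 * (j : ℝ))) K).symm
  -- minimizers
  have hfin : ∀ k : Fin K, ((fun i => d i (t k)) '' Q (t k)).Finite :=
    fun k => (Set.toFinite _).image _
  have hne : ∀ k : Fin K, ((fun i => d i (t k)) '' Q (t k)).Nonempty :=
    fun k => (hnonempty k k.isLt).image _
  have hex : ∀ k : Fin K, ∃ i ∈ Q (t k), d i (t k) = F (t k) := by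
    intro k
    have := (hne k).csInf_mem (hfin k)
    obtain ⟨i, hi, hieq⟩ := this
    exact ⟨i, hi, hieq⟩
  choose e he1 he2 using hex
  have heinj : Function.Injective e := by
    intro k k' h
    by_contra hne'
    have hd' := hdisjoint k k' k.isLt k'.isLt (fun hv => hne' (Fin.ext hv))
    exact (Set.disjoint_left.mp hd' (he1 k)) (h ▸ he1 k')
  -- lower bound
  have hlb : ∀ c ∈ {c : ℝ | ∃ σ : Fin K → Fin n, Function.Injective σ ∧
      (∀ k : Fin K, σ k ∈ Q (l - 2 * ((K : ℝ) - 1 - (k : ℕ)))) ∧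
      c = ∑ k : Fin K, d (σ k) (l - 2 * ((K : ℝ) - 1 - (k : ℕ)))},
      (∑ k : Fin K, F (t k)) ≤ c := by
    rintro c ⟨σ, _, hmem, rfl⟩
    refine Finset.sum_le_sum fun k _ => ?_
    exact csInf_le (hfin k).bddBelow ⟨σ k, hmem k, rfl⟩
  have hmem : (∑ k : Fin K, F (t k)) ∈ {c : ℝ | ∃ σ : Fin K → Fin n, Function.Injective σ ∧
      (∀ k : Fin K, σ k ∈ Q (l - 2 * ((K : ℝ) - 1 - (k : ℕ)))) ∧
      c = ∑ k : Fin K, d (σ k) (l - 2 * ((K : ℝ) - 1 - (k : ℕ)))} := by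
    exact ⟨e, heinj, he1, by exact Finset.sum_congr rfl fun k _ => (he2 k).symm⟩
  rw [hsum]
  exact le_antisymm (le_csInf ⟨_, hmem⟩ hlb) (csInf_le ⟨_, hlb⟩ hmem)
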